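/- Assume (H). Then for every x ∈ ℝ^d the matrix a(x) is symmetric positive semidefinite; a(x) = 0 if x ∈ Γ; a(x) is positive definite if x ∉ Γ; and for every α > 0 there exists c > 0 such that sᵀ a(x) s ≥ c‖s‖² for all x ∈ Γ_α and all s ∈ ℝ^d. -/

import Mathlib

open MeasureTheory Real Set
open scoped RealInnerProductSpace ENNReal NNReal

noncomputable section

abbrev Euc (d : ℕ) := EuclideanSpace ℝ (Fin d)

variable {d : ℕ}

/-- gradient of `g` with respect to its first variable -/
def grad1 (g : Euc d → Euc d → ℝ) (y x : Euc d) : Euc d :=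
  gradient (fun z => g z x) y

/-- Hessian of `g` with respect to its first variable, as a continuous bilinear map -/
def hess11 (g : Euc d → Euc d → ℝ) (y x : Euc d) : Euc d →L[ℝ] Euc d →L[ℝ] ℝ :=
  fderiv ℝ (fderiv ℝ (fun z => g z x)) y

/-- set of evolutionary singularities -/
def Gam (g : Euc d → Euc d → ℝ) : Set (Euc d) := {x | grad1 g x x = 0}

def GamAlpha (g : Euc d → Euc d → ℝ) (α : ℝ) : Set (Euc d) :=
  {x | α ≤ Metric.infDist x (Gam g) ∧ ‖x‖ ≤ 1 / α}

/-- `p` is a measurable symmetric probability-density kernel -/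
def IsMutKernel (p : Euc d → Euc d → ℝ) : Prop :=
  Measurable (Function.uncurry p) ∧
  (∀ x h, 0 ≤ p x h) ∧
  (∀ x, Integrable (fun h => p x h)) ∧
  (∀ x, (∫ h, p x h) = 1) ∧
  (∀ x h, p x (-h) = p x h)

/-- Assumption (H2) -/
def H2 (p : Euc d → Euc d → ℝ) : Prop :=
  (∀ x, Integrable (fun h : Euc d => ‖h‖ ^ 3 * p x h)) ∧
  (∃ M : ℝ, ∀ x, (∫ h : Euc d, ‖h‖ ^ 3 * p x h) ≤ M) ∧
  ∃ m : ℝ → ℝ, Measurable m ∧ (∀ r, 0 ≤ m r) ∧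
    Integrable (fun h : Euc d => (‖h‖ ^ 2 ⊔ ‖h‖ ^ 3) * m ‖h‖) ∧
    (∀ x y h, |p x h - p y h| ≤ ‖x - y‖ * m ‖h‖) ∧
    (∀ x h, p x h ≤ m ‖h‖)

/-- Assumption (H1) -/
def H1 (g : Euc d → Euc d → ℝ) : Prop :=
  (∀ x : Euc d, ContDiff ℝ 2 (fun z => g z x)) ∧
  (∃ C : ℝ, ∀ y x : Euc d, ‖grad1 g y x‖ ≤ C) ∧
  (∃ K : ℝ≥0, LipschitzWith K (fun q : Euc d × Euc d => grad1 g q.1 q.2)) ∧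
  (∃ C : ℝ, ∀ y x : Euc d, ‖hess11 g y x‖ ≤ C) ∧
  (∃ K : ℝ≥0, LipschitzWith K (fun q : Euc d × Euc d => hess11 g q.1 q.2))

/-- drift coefficient b -/
def bCoeff (g p : Euc d → Euc d → ℝ) (x : Euc d) : Euc d :=
  (WithLp.equiv 2 (Fin d → ℝ)).symm fun k =>
    ∫ h : Euc d, h k * max (⟪grad1 g x x, h⟫) 0 * p x h

/-- diffusion matrix a -/
def aMat (g p : Euc d → Euc d → ℝ) (x : Euc d) : Matrix (Fin d) (Fin d) ℝ :=
  Matrix.of fun k l => ∫ h : Euc d, h k * h l * max (⟪h, grad1 g x x⟫) 0 * p x h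

/-- second-order drift coefficient b-tilde -/
def btCoeff (g p : Euc d → Euc d → ℝ) (x : Euc d) : Euc d :=
  (WithLp.equiv 2 (Fin d → ℝ)).symm fun k =>
    (1 / 2) * ∫ h in {h : Euc d | 0 < ⟪h, grad1 g x x⟫},
      h k * hess11 g x x h h * p x h

/-- quadratic form sᵀ a(x) s -/
def quadA (g p : Euc d → Euc d → ℝ) (x s : Euc d) : ℝ :=
  ∑ k, ∑ l, s k * aMat g p x k l * s l

/-- quadratic form sᵀ a(x)⁻¹ s -/
def quadAInv (g p : Euc d → Euc d → ℝ) (x s : Euc d) : ℝ :=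
  ∑ k, ∑ l, s k * (aMat g p x)⁻¹ k l * s l

/-- full Hessian of `g` (as a function on the product space) at `(y,x)` -/
def hessF (g : Euc d → Euc d → ℝ) (y x : Euc d) :
    (Euc d × Euc d) →L[ℝ] (Euc d × Euc d) →L[ℝ] ℝ :=
  fderiv ℝ (fderiv ℝ (fun q : Euc d × Euc d => g q.1 q.2)) (y, x)

/-- action of a matrix on a vector of `Euc d` -/
def mulVecE (M : Matrix (Fin d) (Fin d) ℝ) (v : Euc d) : Euc d :=
  (WithLp.equiv 2 (Fin d → ℝ)).symm (M.mulVec (WithLp.equiv 2 (Fin d → ℝ) v))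

lemma abs_apply_le (h : Euc d) (k : Fin d) : |h k| ≤ ‖h‖ := by
  rw [EuclideanSpace.norm_eq h]
  have h1 : |h k| = Real.sqrt (‖h k‖ ^ 2) := by rw [Real.sqrt_sq_eq_abs]; simp
  rw [h1]
  exact Real.sqrt_le_sqrt
    (Finset.single_le_sum (f := fun i => ‖h i‖ ^ 2) (fun i _ => sq_nonneg _) (Finset.mem_univ k))

lemma null_hyper (v : Euc d) (hv : v ≠ 0) : (volume {h : Euc d | ⟪h, v⟫ = 0}) = 0 := by
  have : {h : Euc d | ⟪h, v⟫ = 0} = ((ℝ ∙ v)ᗮ : Submodule ℝ (Euc d)) := by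
    ext h
    rw [Set.mem_setOf_eq, SetLike.mem_coe, Submodule.mem_orthogonal_singleton_iff_inner_right,
      real_inner_comm]
  rw [this]
  apply Measure.addHaar_submodule
  intro htop
  apply hv
  have hmv : v ∈ (ℝ ∙ v)ᗮ := htop ▸ Submodule.mem_top
  have := Submodule.mem_orthogonal_singleton_iff_inner_right.mp hmv
  rwa [real_inner_self_eq_norm_sq, pow_eq_zero_iff (by norm_num), norm_eq_zero] at this

lemma meas_p {p : Euc d → Euc d → ℝ} (hm : Measurable (Function.uncurry p)) (x : Euc d) :
    Measurable (fun h => p x h) := hm.comp measurable_prodMk_left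

-- integrability of entry integrand
lemma integ_entry {p : Euc d → Euc d → ℝ} (hm : Measurable (Function.uncurry p))
    (hp3 : Integrable (fun h : Euc d => ‖h‖ ^ 3 * p x h))
    (hpnn : ∀ h, 0 ≤ p x h)
    (v : Euc d) {C : ℝ} (hC : ‖v‖ ≤ C) (k l : Fin d) :
    Integrable (fun h : Euc d => h k * h l * max (⟪h, v⟫) 0 * p x h) := by
  apply (hp3.const_mul C).mono'
  · apply Measurable.aestronglyMeasurable
    apply Measurable.mul ?_ (meas_p hm x)
    apply Measurable.mul
    · exact ((EuclideanSpace.proj k : Euc d →L[ℝ] ℝ).continuous.measurable).mul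
        ((EuclideanSpace.proj l : Euc d →L[ℝ] ℝ).continuous.measurable)
    · exact (continuous_id.inner continuous_const).measurable.max measurable_const
  · filter_upwards with h
    have h0C : 0 ≤ C := le_trans (norm_nonneg v) hC
    have hb : |max (⟪h, v⟫) 0| ≤ ‖h‖ * C := by
      rw [abs_of_nonneg (le_max_right _ _)]
      apply max_le _ (by positivity)
      calc ⟪h, v⟫ ≤ |⟪h, v⟫| := le_abs_self _
        _ ≤ ‖h‖ * ‖v‖ := abs_real_inner_le_norm h v
        _ ≤ ‖h‖ * C := by gcongr
    have := hpnn h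
    calc ‖h k * h l * max (⟪h, v⟫) 0 * p x h‖
        = |h k| * |h l| * |max (⟪h, v⟫) 0| * p x h := by
          rw [Real.norm_eq_abs, abs_mul, abs_mul, abs_mul, abs_of_nonneg this]
      _ ≤ ‖h‖ * ‖h‖ * (‖h‖ * C) * p x h := by
          have h1 := abs_apply_le h k
          have h2 := abs_apply_le h l
          have h3 := abs_nonneg (h k)
          have h4 := abs_nonneg (h l)
          have h5 := abs_nonneg (max (⟪h, v⟫) 0)
          have h6 := norm_nonneg h
          exact mul_le_mul_of_nonneg_right
            (mul_le_mul (mul_le_mul h1 h2 h4 h6) hb h5 (by positivity)) this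
      _ = C * (‖h‖ ^ 3 * p x h) := by ring

lemma quadA_eq_integral {g p : Euc d → Euc d → ℝ} (hm : Measurable (Function.uncurry p))
    {x : Euc d} (hp3 : Integrable (fun h : Euc d => ‖h‖ ^ 3 * p x h))
    (hpnn : ∀ h, 0 ≤ p x h) {C : ℝ} (hC : ‖grad1 g x x‖ ≤ C) (s : Euc d) :
    quadA g p x s =
      ∫ h : Euc d, (⟪h, s⟫) ^ 2 * max (⟪h, grad1 g x x⟫) 0 * p x h := by
  set v := grad1 g x x with hv
  have hent : ∀ k l : Fin d,
      Integrable (fun h : Euc d => h k * h l * max (⟪h, v⟫) 0 * p x h) :=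
    fun k l => integ_entry hm hp3 hpnn v hC k l
  have hint : ∀ k l : Fin d, Integrable
      (fun h : Euc d => (s k * s l) * (h k * h l * max (⟪h, v⟫) 0 * p x h)) :=
    fun k l => (hent k l).const_mul _
  have step1 : quadA g p x s
      = ∑ k, ∑ l, ∫ h : Euc d, (s k * s l) * (h k * h l * max (⟪h, v⟫) 0 * p x h) := by
    unfold quadA aMat
    apply Finset.sum_congr rfl; intro k _
    apply Finset.sum_congr rfl; intro l _
    rw [integral_const_mul, Matrix.of_apply]
    ring
  rw [step1]
  have step2 : ∀ k : Fin d,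
      (∑ l, ∫ h : Euc d, (s k * s l) * (h k * h l * max (⟪h, v⟫) 0 * p x h))
      = ∫ h : Euc d, ∑ l, (s k * s l) * (h k * h l * max (⟪h, v⟫) 0 * p x h) :=
    fun k => (integral_finset_sum _ (fun l _ => hint k l)).symm
  rw [Finset.sum_congr rfl (fun k _ => step2 k),
    ← integral_finset_sum _ (fun k _ => integrable_finset_sum _ (fun l _ => hint k l))]
  apply integral_congr_ae
  filter_upwards with h
  have hin : (⟪h, s⟫ : ℝ) = ∑ i, h i * s i := by
    simp [PiLp.inner_apply, RCLike.inner_apply, conj_trivial]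
    exact Finset.sum_congr rfl (fun i _ => mul_comm _ _)
  rw [hin, sq]
  simp only [Finset.sum_mul, Finset.mul_sum]
  apply Finset.sum_congr rfl; intro k _
  apply Finset.sum_congr rfl; intro l _
  ring

lemma entry_lip {g p : Euc d → Euc d → ℝ} (hm : Measurable (Function.uncurry p))
    (hp3 : ∀ x, Integrable (fun h : Euc d => ‖h‖ ^ 3 * p x h))
    (hpnn : ∀ x h, 0 ≤ p x h)
    {Cg : ℝ} (hCg : ∀ y x : Euc d, ‖grad1 g y x‖ ≤ Cg)
    {K : ℝ≥0} (hK : LipschitzWith K (fun q : Euc d × Euc d => grad1 g q.1 q.2))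
    {m : ℝ → ℝ} (hmm : Measurable m) (hmnn : ∀ r, 0 ≤ m r)
    (hmint : Integrable (fun h : Euc d => (‖h‖ ^ 2 ⊔ ‖h‖ ^ 3) * m ‖h‖))
    (hplip : ∀ x y h, |p x h - p y h| ≤ ‖x - y‖ * m ‖h‖)
    (hpbd : ∀ x h, p x h ≤ m ‖h‖) :
    ∃ L : ℝ, 0 ≤ L ∧ ∀ (k l : Fin d) (x y : Euc d),
      |aMat g p x k l - aMat g p y k l| ≤ L * ‖x - y‖ := by
  have hCg0 : (0 : ℝ) ≤ Cg := le_trans (norm_nonneg _) (hCg 0 0)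
  have hI : Integrable (fun h : Euc d => ‖h‖ ^ 3 * m ‖h‖) := by
    apply hmint.mono'
    · exact ((measurable_norm.pow_const 3).mul (hmm.comp measurable_norm)).aestronglyMeasurable
    · filter_upwards with h
      rw [Real.norm_eq_abs, abs_of_nonneg (mul_nonneg (by positivity) (hmnn _))]
      exact mul_le_mul_of_nonneg_right le_sup_right (hmnn _)
  refine ⟨(Cg + K) * ∫ h : Euc d, ‖h‖ ^ 3 * m ‖h‖,
    mul_nonneg (by positivity) (integral_nonneg fun h => mul_nonneg (by positivity) (hmnn _)), ?_⟩
  intro k l x y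
  set vx := grad1 g x x with hvx
  set vy := grad1 g y y with hvy
  have hvlip : ‖vx - vy‖ ≤ (K : ℝ) * ‖x - y‖ := by
    have := hK.dist_le_mul (x, x) (y, y)
    rwa [Prod.dist_eq, dist_eq_norm, dist_eq_norm, max_self, ← dist_eq_norm,
      ← dist_eq_norm] at this
  set fx : Euc d → ℝ := fun h => h k * h l * max (⟪h, vx⟫) 0 * p x h with hfx
  set fy : Euc d → ℝ := fun h => h k * h l * max (⟪h, vy⟫) 0 * p y h with hfy
  have hentx : Integrable fx := integ_entry hm (hp3 x) (hpnn x) vx (hCg x x) k l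
  have henty : Integrable fy := integ_entry hm (hp3 y) (hpnn y) vy (hCg y y) k l
  have hpt : ∀ h : Euc d, |fx h - fy h| ≤ ((Cg + K) * ‖x - y‖) * (‖h‖ ^ 3 * m ‖h‖) := by
    intro h
    set Mx := max (⟪h, vx⟫) 0 with hMx
    set My := max (⟪h, vy⟫) 0 with hMy
    have hMx0 : 0 ≤ Mx := le_max_right _ _
    have hMxb : Mx ≤ ‖h‖ * Cg := by
      apply max_le _ (by positivity)
      calc ⟪h, vx⟫ ≤ |⟪h, vx⟫| := le_abs_self _
        _ ≤ ‖h‖ * ‖vx‖ := abs_real_inner_le_norm h vx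
        _ ≤ ‖h‖ * Cg := by gcongr; exact hCg x x
    have hMdiff : |Mx - My| ≤ ‖h‖ * ((K : ℝ) * ‖x - y‖) := by
      calc |Mx - My| ≤ |⟪h, vx⟫ - ⟪h, vy⟫| := abs_max_sub_max_le_abs _ _ _
        _ = |⟪h, vx - vy⟫| := by rw [inner_sub_right]
        _ ≤ ‖h‖ * ‖vx - vy‖ := abs_real_inner_le_norm _ _
        _ ≤ ‖h‖ * ((K : ℝ) * ‖x - y‖) := by gcongr
    have h1 : |fx h - fy h| = |h k * h l| * |Mx * p x h - My * p y h| := by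
      rw [← abs_mul]; congr 1; simp only [hfx, hfy]; ring
    have h2 : |Mx * p x h - My * p y h| ≤
        ‖h‖ * Cg * (‖x - y‖ * m ‖h‖) + m ‖h‖ * (‖h‖ * ((K : ℝ) * ‖x - y‖)) := by
      calc |Mx * p x h - My * p y h| = |Mx * (p x h - p y h) + (Mx - My) * p y h| := by
            congr 1; ring
        _ ≤ |Mx * (p x h - p y h)| + |(Mx - My) * p y h| := abs_add_le _ _
        _ = Mx * |p x h - p y h| + |Mx - My| * p y h := by
            rw [abs_mul, abs_mul, abs_of_nonneg hMx0, abs_of_nonneg (hpnn y h)]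
        _ ≤ (‖h‖ * Cg) * (‖x - y‖ * m ‖h‖) + (‖h‖ * ((K : ℝ) * ‖x - y‖)) * m ‖h‖ := by
            gcongr
            · exact hplip x y h
            · exact hpnn y h
            · exact hpbd y h
        _ = ‖h‖ * Cg * (‖x - y‖ * m ‖h‖) + m ‖h‖ * (‖h‖ * ((K : ℝ) * ‖x - y‖)) := by ring
    have hkl : |h k * h l| ≤ ‖h‖ * ‖h‖ := by
      rw [abs_mul]
      exact mul_le_mul (abs_apply_le h k) (abs_apply_le h l) (abs_nonneg _) (norm_nonneg _)
    calc |fx h - fy h| = |h k * h l| * |Mx * p x h - My * p y h| := h1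
      _ ≤ (‖h‖ * ‖h‖) * (‖h‖ * Cg * (‖x - y‖ * m ‖h‖) + m ‖h‖ * (‖h‖ * ((K : ℝ) * ‖x - y‖))) :=
          mul_le_mul hkl h2 (abs_nonneg _) (by positivity)
      _ = ((Cg + K) * ‖x - y‖) * (‖h‖ ^ 3 * m ‖h‖) := by ring
  have hstep : aMat g p x k l - aMat g p y k l = ∫ h : Euc d, (fx h - fy h) := by
    rw [integral_sub hentx henty]; rfl
  rw [hstep]
  calc |∫ h : Euc d, (fx h - fy h)| ≤ ∫ h : Euc d, |fx h - fy h| := by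
        simpa [Real.norm_eq_abs] using
          norm_integral_le_integral_norm (μ := volume) (fun h => fx h - fy h)
    _ ≤ ∫ h : Euc d, ((Cg + K) * ‖x - y‖) * (‖h‖ ^ 3 * m ‖h‖) := by
        apply integral_mono (hentx.sub henty).abs (hI.const_mul _)
        intro h; exact hpt h
    _ = ((Cg + K) * ∫ h : Euc d, ‖h‖ ^ 3 * m ‖h‖) * ‖x - y‖ := by
        rw [integral_const_mul]; ring

lemma quadA_pos {g p : Euc d → Euc d → ℝ} (hm : Measurable (Function.uncurry p))
    (hpnn : ∀ x h, 0 ≤ p x h) (hpint : ∀ x, Integrable (fun h => p x h))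
    (hpone : ∀ x, (∫ h, p x h) = 1) (hpsymm : ∀ x h, p x (-h) = p x h)
    (hp3 : ∀ x, Integrable (fun h : Euc d => ‖h‖ ^ 3 * p x h))
    {Cg : ℝ} (hCg : ∀ y x : Euc d, ‖grad1 g y x‖ ≤ Cg)
    {x s : Euc d} (hx : grad1 g x x ≠ 0) (hs : s ≠ 0) :
    0 < quadA g p x s := by
  have hCg0 : (0 : ℝ) ≤ Cg := le_trans (norm_nonneg _) (hCg 0 0)
  rw [quadA_eq_integral hm (hp3 x) (hpnn x) (hCg x x) s]
  set v := grad1 g x x with hv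
  set f : Euc d → ℝ := fun h => (⟪h, s⟫) ^ 2 * max (⟪h, v⟫) 0 * p x h with hf
  have fnn : ∀ h, 0 ≤ f h := fun h =>
    mul_nonneg (mul_nonneg (sq_nonneg _) (le_max_right _ _)) (hpnn x h)
  have fint : Integrable f := by
    apply ((hp3 x).const_mul (‖s‖ ^ 2 * Cg)).mono'
    · apply Measurable.aestronglyMeasurable
      exact ((((continuous_id.inner (continuous_const (y := s))).pow 2).mul
        ((continuous_id.inner (continuous_const (y := v))).max continuous_const)).measurable).mul
        (meas_p hm x)
    · filter_upwards with h
      have hb : max (⟪h, v⟫) 0 ≤ ‖h‖ * Cg := by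
        apply max_le _ (by positivity)
        calc ⟪h, v⟫ ≤ |⟪h, v⟫| := le_abs_self _
          _ ≤ ‖h‖ * ‖v‖ := abs_real_inner_le_norm h v
          _ ≤ ‖h‖ * Cg := by gcongr; exact hCg x x
      have hb2 : (⟪h, s⟫) ^ 2 ≤ (‖h‖ * ‖s‖) ^ 2 := by
        calc (⟪h, s⟫ : ℝ) ^ 2 = |(⟪h, s⟫ : ℝ)| ^ 2 := (sq_abs _).symm
          _ ≤ (‖h‖ * ‖s‖) ^ 2 := pow_le_pow_left₀ (abs_nonneg _) (abs_real_inner_le_norm h s) 2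
      calc ‖f h‖ = (⟪h, s⟫) ^ 2 * max (⟪h, v⟫) 0 * p x h := by
            rw [Real.norm_eq_abs, abs_of_nonneg (fnn h)]
        _ ≤ (‖h‖ * ‖s‖) ^ 2 * (‖h‖ * Cg) * p x h :=
            mul_le_mul_of_nonneg_right
              (mul_le_mul hb2 hb (le_max_right _ _) (by positivity)) (hpnn x h)
        _ = ‖s‖ ^ 2 * Cg * (‖h‖ ^ 3 * p x h) := by ring
  apply (integral_pos_iff_support_of_nonneg fnn fint).mpr
  set P : Set (Euc d) := {h | 0 < p x h} with hP
  set Q : Set (Euc d) := {h | (0 : ℝ) < ⟪h, v⟫} with hQ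
  set N2 : Set (Euc d) := {h | (⟪h, s⟫ : ℝ) = 0} with hN2
  have hN1null : volume {h : Euc d | (⟪h, v⟫ : ℝ) = 0} = 0 := null_hyper v hx
  have hN2null : volume N2 = 0 := null_hyper s hs
  have hPQpos : 0 < volume (P ∩ Q) := by
    by_contra hcon
    have h0 : volume (P ∩ Q) = 0 := by
      simpa using (not_lt.mp hcon)
    have hnegset : P ∩ {h : Euc d | (⟪h, v⟫ : ℝ) < 0} = Neg.neg ⁻¹' (P ∩ Q) := by
      ext h
      simp only [Set.mem_inter_iff, Set.mem_preimage, Set.mem_setOf_eq, hP, hQ]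
      rw [hpsymm x h, inner_neg_left]
      constructor
      · rintro ⟨h1, h2⟩; exact ⟨h1, by linarith⟩
      · rintro ⟨h1, h2⟩; exact ⟨h1, by linarith⟩
    have hneg0 : volume (P ∩ {h : Euc d | (⟪h, v⟫ : ℝ) < 0}) = 0 := by
      rw [hnegset, Measure.measure_preimage_neg, h0]
    have hsub : P ⊆ (P ∩ Q) ∪ (P ∩ {h : Euc d | (⟪h, v⟫ : ℝ) < 0})
        ∪ {h : Euc d | (⟪h, v⟫ : ℝ) = 0} := by
      intro h hh
      rcases lt_trichotomy (0 : ℝ) (⟪h, v⟫ : ℝ) with hlt | heq | hgt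
      · exact Or.inl (Or.inl ⟨hh, hlt⟩)
      · exact Or.inr heq.symm
      · exact Or.inl (Or.inr ⟨hh, hgt⟩)
    have hP0 : volume P = 0 := by
      refine le_antisymm ?_ (zero_le)
      calc volume P ≤ volume ((P ∩ Q) ∪ (P ∩ {h : Euc d | (⟪h, v⟫ : ℝ) < 0})
          ∪ {h : Euc d | (⟪h, v⟫ : ℝ) = 0}) := measure_mono hsub
        _ ≤ volume ((P ∩ Q) ∪ (P ∩ {h : Euc d | (⟪h, v⟫ : ℝ) < 0}))
            + volume {h : Euc d | (⟪h, v⟫ : ℝ) = 0} := measure_union_le _ _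
        _ ≤ (volume (P ∩ Q) + volume (P ∩ {h : Euc d | (⟪h, v⟫ : ℝ) < 0}))
            + volume {h : Euc d | (⟪h, v⟫ : ℝ) = 0} := by
            gcongr; exact measure_union_le _ _
        _ = 0 := by rw [h0, hneg0, hN1null]; simp
    have hae : ∀ᵐ h : Euc d, p x h = 0 := by
      rw [MeasureTheory.ae_iff]
      have : {h : Euc d | ¬ p x h = 0} ⊆ P := by
        intro h hh
        exact lt_of_le_of_ne (hpnn x h) (Ne.symm hh)
      exact measure_mono_null this hP0
    have : (∫ h, p x h) = 0 := integral_eq_zero_of_ae hae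
    rw [hpone x] at this
    norm_num at this
  have hsupp : (P ∩ Q) \ N2 ⊆ Function.support f := by
    rintro h ⟨⟨hp1, hq1⟩, hn2⟩
    have : 0 < f h := by
      have hm1 : max (⟪h, v⟫) 0 = ⟪h, v⟫ := max_eq_left (le_of_lt hq1)
      rw [hf]
      simp only
      rw [hm1]
      apply mul_pos (mul_pos _ hq1) hp1
      have : (⟪h, s⟫ : ℝ) ≠ 0 := hn2
      positivity
    exact ne_of_gt this
  calc (0 : ℝ≥0∞) < volume (P ∩ Q) := hPQpos
    _ = volume ((P ∩ Q) \ N2) := (measure_diff_null hN2null).symm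
    _ ≤ volume (Function.support f) := measure_mono hsupp

lemma quadA_smul (g p : Euc d → Euc d → ℝ) (x s : Euc d) (t : ℝ) :
    quadA g p x (t • s) = t ^ 2 * quadA g p x s := by
  unfold quadA
  rw [Finset.mul_sum]
  apply Finset.sum_congr rfl; intro k _
  rw [Finset.mul_sum]
  apply Finset.sum_congr rfl; intro l _
  simp only [PiLp.smul_apply, smul_eq_mul]
  ring

lemma quadA_zero_right (g p : Euc d → Euc d → ℝ) (x : Euc d) : quadA g p x 0 = 0 := by
  unfold quadA
  simp

theorem stmt4 {d : ℕ} (hd : 1 ≤ d) (g p : Euc d → Euc d → ℝ)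
    (hker : IsMutKernel p) (hH1 : H1 g) (hH2 : H2 p) :
    (∀ x : Euc d, (aMat g p x).IsSymm) ∧
    (∀ x s : Euc d, 0 ≤ quadA g p x s) ∧
    (∀ x ∈ Gam g, aMat g p x = 0) ∧
    (∀ x : Euc d, x ∉ Gam g → ∀ s : Euc d, s ≠ 0 → 0 < quadA g p x s) ∧
    (∀ α : ℝ, 0 < α → ∃ c : ℝ, 0 < c ∧
      ∀ x ∈ GamAlpha g α, ∀ s : Euc d, c * ‖s‖ ^ 2 ≤ quadA g p x s) := by
  obtain ⟨hmeas, hpnn, hpint, hpone, hpsymm⟩ := hker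
  obtain ⟨-, ⟨Cg, hCg⟩, ⟨K, hK⟩, -, -⟩ := hH1
  obtain ⟨hp3, -, m, hmm, hmnn, hmint, hplip, hpbd⟩ := hH2
  refine ⟨?_, ?_, ?_, ?_, ?_⟩
  · -- symmetry
    intro x
    show Matrix.transpose (aMat g p x) = aMat g p x
    apply Matrix.ext
    intro k l
    rw [Matrix.transpose_apply]
    show (∫ h : Euc d, h l * h k * max (⟪h, grad1 g x x⟫) 0 * p x h)
      = ∫ h : Euc d, h k * h l * max (⟪h, grad1 g x x⟫) 0 * p x h
    congr 1; funext h; ring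
  · -- nonnegativity
    intro x s
    rw [quadA_eq_integral hmeas (hp3 x) (hpnn x) (hCg x x) s]
    apply integral_nonneg
    intro h
    exact mul_nonneg (mul_nonneg (sq_nonneg _) (le_max_right _ _)) (hpnn x h)
  · -- zero on Gam
    intro x hx
    have hg : grad1 g x x = 0 := hx
    apply Matrix.ext
    intro k l
    show (∫ h : Euc d, h k * h l * max (⟪h, grad1 g x x⟫) 0 * p x h) = 0
    rw [hg]
    simp
  · -- positive definiteness off Gam
    intro x hx s hs
    exact quadA_pos hmeas hpnn hpint hpone hpsymm hp3 hCg (fun hh => hx hh) hs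
  · -- uniform ellipticity on GamAlpha
    intro α hα
    by_cases hne : (GamAlpha g α).Nonempty
    swap
    · exact ⟨1, one_pos, fun x hx => absurd ⟨x, hx⟩ hne⟩
    have hcl : IsClosed (GamAlpha g α) := by
      have hEq : GamAlpha g α
          = {x : Euc d | α ≤ Metric.infDist x (Gam g)} ∩ {x : Euc d | ‖x‖ ≤ 1 / α} := by
        ext x; exact Iff.rfl
      rw [hEq]
      exact (isClosed_le continuous_const (Metric.continuous_infDist_pt _)).inter
        (isClosed_le continuous_norm continuous_const)
    have hbd : Bornology.IsBounded (GamAlpha g α) := by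
      apply (Metric.isBounded_closedBall (x := (0 : Euc d)) (r := 1 / α)).subset
      intro x hx
      exact mem_closedBall_zero_iff.mpr hx.2
    have hKc : IsCompact (GamAlpha g α) := Metric.isCompact_of_isClosed_isBounded hcl hbd
    have hSc : IsCompact (Metric.sphere (0 : Euc d) 1) := isCompact_sphere 0 1
    have hSne : (Metric.sphere (0 : Euc d) 1).Nonempty := by
      refine ⟨EuclideanSpace.single ⟨0, hd⟩ (1 : ℝ), ?_⟩
      rw [mem_sphere_zero_iff_norm, EuclideanSpace.norm_single]
      norm_num
    have hTc : IsCompact (GamAlpha g α ×ˢ Metric.sphere (0 : Euc d) 1) := hKc.prod hSc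
    have hTne : (GamAlpha g α ×ˢ Metric.sphere (0 : Euc d) 1).Nonempty := hne.prod hSne
    obtain ⟨L, hL0, hLip⟩ := entry_lip hmeas hp3 hpnn hCg hK hmm hmnn hmint hplip hpbd
    have hcont_entry : ∀ k l : Fin d, Continuous (fun x => aMat g p x k l) := by
      intro k l
      apply LipschitzWith.continuous (K := L.toNNReal)
      apply LipschitzWith.of_dist_le_mul
      intro a b
      rw [Real.dist_eq, dist_eq_norm]
      calc |aMat g p a k l - aMat g p b k l| ≤ L * ‖a - b‖ := hLip k l a b
        _ = (L.toNNReal : ℝ) * ‖a - b‖ := by rw [Real.coe_toNNReal L hL0]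
    have hco : ∀ k : Fin d, Continuous (fun s : Euc d => s k) := by
      intro k
      exact (EuclideanSpace.proj k : Euc d →L[ℝ] ℝ).continuous
    have hFc : Continuous (fun q : Euc d × Euc d => quadA g p q.1 q.2) := by
      unfold quadA
      apply continuous_finset_sum
      intro k _
      apply continuous_finset_sum
      intro l _
      exact (((hco k).comp continuous_snd).mul
        ((hcont_entry k l).comp continuous_fst)).mul ((hco l).comp continuous_snd)
    obtain ⟨z, hzT, hzmin⟩ := hTc.exists_isMinOn hTne hFc.continuousOn
    have hznotGam : grad1 g z.1 z.1 ≠ 0 := by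
      intro hmem
      have h0 : Metric.infDist z.1 (Gam g) = 0 := Metric.infDist_zero_of_mem hmem
      have h1 : α ≤ Metric.infDist z.1 (Gam g) := hzT.1.1
      rw [h0] at h1
      linarith
    have hzs : z.2 ≠ 0 := by
      have h1 : ‖z.2‖ = 1 := mem_sphere_zero_iff_norm.mp hzT.2
      intro h
      rw [h, norm_zero] at h1
      norm_num at h1
    have hcpos : 0 < quadA g p z.1 z.2 :=
      quadA_pos hmeas hpnn hpint hpone hpsymm hp3 hCg hznotGam hzs
    refine ⟨quadA g p z.1 z.2, hcpos, ?_⟩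
    intro x hx s
    by_cases hs : s = 0
    · subst hs
      rw [quadA_zero_right]
      simp
    · set u : Euc d := ‖s‖⁻¹ • s with hu_def
      have hns : ‖s‖ ≠ 0 := norm_ne_zero_iff.mpr hs
      have hu : u ∈ Metric.sphere (0 : Euc d) 1 := by
        rw [mem_sphere_zero_iff_norm]
        exact norm_smul_inv_norm hs
      have hmem : (x, u) ∈ GamAlpha g α ×ˢ Metric.sphere (0 : Euc d) 1 := ⟨hx, hu⟩
      have hmin : quadA g p z.1 z.2 ≤ quadA g p x u := hzmin hmem
      have hsu : ‖s‖ • u = s := smul_inv_smul₀ hns s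
      have hhom : quadA g p x (‖s‖ • u) = ‖s‖ ^ 2 * quadA g p x u := quadA_smul g p x u ‖s‖
      rw [hsu] at hhom
      calc quadA g p z.1 z.2 * ‖s‖ ^ 2 ≤ quadA g p x u * ‖s‖ ^ 2 :=
            mul_le_mul_of_nonneg_right hmin (sq_nonneg _)
        _ = quadA g p x s := by rw [hhom]; ring
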